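/- Let p be a prime and m ≥ 1 an integer, and let π : GL₂(ℤ_p) → GL₂(ℤ/p^mℤ) be the reduction homomorphism. Let H and R be finite-index subgroups of GL₂(ℤ_p) such that ker(π) ≤ R, and set H' := π⁻¹(π(H)). Then [R ∩ H' : R ∩ H] = [H' : H]. -/

import Mathlib

open Subgroup

/-- Abstract version: for a group hom `f` with `ker f ≤ R`, and `R` of finite index
(so that the common factor is nonzero), `[R ⊓ H' : R ⊓ H] = [H' : H]`
where `H' = f⁻¹(f(H))`. -/
theorem aux_relindex_inf_comap_map_eq {G G' : Type*} [Group G] [Group G']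
    (f : G →* G') (H R : Subgroup G) [R.FiniteIndex]
    (hker : f.ker ≤ R) :
    (R ⊓ H).relIndex (R ⊓ comap f (map f H)) = H.relIndex (comap f (map f H)) := by
  set H' : Subgroup G := comap f (map f H) with hH'
  have hHle : H ≤ H' := le_comap_map f H
  have hmapH' : map f H' = map f H := by
    rw [hH', map_comap_eq, inf_eq_right]
    exact map_le_range f H
  have hR : comap f (map f R) = R := comap_map_eq_self hker
  have e5 : R.relIndex H' = R.relIndex H := by
    rw [← hR, relIndex_comap, relIndex_comap, hmapH']
  have e1 : (R ⊓ H).relIndex (R ⊓ H') * (R ⊓ H').relIndex H' = (R ⊓ H).relIndex H' :=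
    relIndex_mul_relIndex _ _ _ (inf_le_inf_left R hHle) inf_le_right
  have e2 : (R ⊓ H).relIndex H * H.relIndex H' = (R ⊓ H).relIndex H' :=
    relIndex_mul_relIndex _ _ _ inf_le_right hHle
  rw [inf_relIndex_right] at e1 e2
  have hc : R.relIndex H ≠ 0 := by have := instFiniteIndex_subgroupOf R H; exact FiniteIndex.index_ne_zero
  rw [e5] at e1
  have := e1.trans e2.symm
  exact Nat.eq_of_mul_eq_mul_left (Nat.pos_of_ne_zero hc)
    (by linarith [Nat.mul_comm ((R ⊓ H).relIndex (R ⊓ H')) (R.relIndex H)])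

/-- Let `π : GL₂(ℤ_p) → GL₂(ℤ/p^mℤ)` be the reduction homomorphism, let `H`, `R` be
finite-index subgroups of `GL₂(ℤ_p)` with `ker π ≤ R`, and set `H' := π⁻¹(π(H))`.
Then `[R ∩ H' : R ∩ H] = [H' : H]`. -/
theorem relindex_inf_comap_map_eq (p : ℕ) [Fact p.Prime] (m : ℕ) (hm : 1 ≤ m)
    (H R : Subgroup (GL (Fin 2) ℤ_[p])) (hHfin : H.FiniteIndex) (hRfin : R.FiniteIndex)
    (hker : (Matrix.GeneralLinearGroup.map (PadicInt.toZModPow m) :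
        GL (Fin 2) ℤ_[p] →* GL (Fin 2) (ZMod (p ^ m))).ker ≤ R) :
    (R ⊓ H).relIndex
        (R ⊓ Subgroup.comap
          (Matrix.GeneralLinearGroup.map (PadicInt.toZModPow m) :
            GL (Fin 2) ℤ_[p] →* GL (Fin 2) (ZMod (p ^ m)))
          (Subgroup.map
            (Matrix.GeneralLinearGroup.map (PadicInt.toZModPow m) :
              GL (Fin 2) ℤ_[p] →* GL (Fin 2) (ZMod (p ^ m))) H)) =
      H.relIndex
        (Subgroup.comap
          (Matrix.GeneralLinearGroup.map (PadicInt.toZModPow m) :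
            GL (Fin 2) ℤ_[p] →* GL (Fin 2) (ZMod (p ^ m)))
          (Subgroup.map
            (Matrix.GeneralLinearGroup.map (PadicInt.toZModPow m) :
              GL (Fin 2) ℤ_[p] →* GL (Fin 2) (ZMod (p ^ m))) H)) :=
  aux_relindex_inf_comap_map_eq _ H R hker
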